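/- In the pointwise setting of a spacelike codimension-2 immersion, there exists a nonzero ξ ∈ W with Ã_ξ = 0 if and only if there exist a self-adjoint linear operator Ã₀ : V → V with tr(Ã₀ ∘ Ã₀) = n² and a vector G ∈ W such that h̃(X,Y) = ⟨Ã₀ X, Y⟩ · G for all X, Y ∈ V. -/

import Mathlib

open scoped RealInnerProductSpace

theorem stmt5
    {n : ℕ} (hn : 1 ≤ n)
    {V : Type*} [NormedAddCommGroup V] [InnerProductSpace ℝ V] [FiniteDimensional ℝ V]
    (hV : Module.finrank ℝ V = n)
    {W : Type*} [AddCommGroup W] [Module ℝ W] [FiniteDimensional ℝ W]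
    (hW : Module.finrank ℝ W = 2)
    (gbar : W →ₗ[ℝ] W →ₗ[ℝ] ℝ)
    (hgsymm : ∀ ξ η : W, gbar ξ η = gbar η ξ)
    (hgnd : ∀ ξ : W, (∀ η : W, gbar ξ η = 0) → ξ = 0)
    (h : V →ₗ[ℝ] V →ₗ[ℝ] W) (hsymm : ∀ X Y : V, h X Y = h Y X)
    (A : W →ₗ[ℝ] V →ₗ[ℝ] V)
    (hAsa : ∀ (ξ : W) (X Y : V), ⟪A ξ X, Y⟫ = ⟪X, A ξ Y⟫)
    (hAh : ∀ (ξ : W) (X Y : V), ⟪A ξ X, Y⟫ = gbar (h X Y) ξ)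
    (H : W) (hH : ∀ ξ : W, gbar H ξ = (LinearMap.trace ℝ V (A ξ)) / (n : ℝ))
    (ht : V → V → W) (hht : ∀ X Y : V, ht X Y = h X Y - ⟪X, Y⟫ • H)
    (At : W → (V →ₗ[ℝ] V))
    (hAt : ∀ ξ : W, At ξ = A ξ - ((LinearMap.trace ℝ V (A ξ)) / (n : ℝ)) • (LinearMap.id : V →ₗ[ℝ] V))
    :
    (∃ ξ : W, ξ ≠ 0 ∧ At ξ = 0) ↔
      ∃ (A0 : V →ₗ[ℝ] V) (G : W),
        (∀ X Y : V, ⟪A0 X, Y⟫ = ⟪X, A0 Y⟫) ∧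
        LinearMap.trace ℝ V (A0 ∘ₗ A0) = (n : ℝ) ^ 2 ∧
        ∀ X Y : V, ht X Y = ⟪A0 X, Y⟫ • G := by
  have hn0 : (0:ℝ) < (n:ℝ) := by exact_mod_cast hn
  constructor
  · rintro ⟨ξ, hξ0, hξ⟩
    have hAξ : A ξ = ((LinearMap.trace ℝ V (A ξ)) / (n : ℝ)) • (LinearMap.id : V →ₗ[ℝ] V) := by
      have h1 := hAt ξ
      rw [hξ] at h1
      linear_combination (norm := module) -h1
    have key : ∀ X Y : V, gbar (ht X Y) ξ = 0 := by
      intro X Y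
      have h1 : gbar (h X Y) ξ = (LinearMap.trace ℝ V (A ξ) / (n:ℝ)) * ⟪X, Y⟫ := by
        rw [← hAh ξ X Y]
        conv_lhs => rw [hAξ]
        simp [real_inner_smul_left]
      rw [hht, map_sub, map_smul, LinearMap.sub_apply, LinearMap.smul_apply, h1, hH ξ]
      simp [mul_comm]
    by_cases hzero : ∀ X Y : V, ht X Y = 0
    · refine ⟨(Real.sqrt n) • LinearMap.id, 0, ?_, ?_, ?_⟩
      · intro X Y
        simp [real_inner_smul_left, real_inner_smul_right, real_inner_comm]
      · rw [LinearMap.smul_comp, LinearMap.comp_smul, LinearMap.id_comp, smul_smul,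
          Real.mul_self_sqrt (by positivity), map_smul, LinearMap.trace_id, hV]
        simp [sq]
      · intro X Y; simp [hzero X Y]
    · push_neg at hzero
      obtain ⟨X0, Y0, hG0⟩ := hzero
      set G0 : W := ht X0 Y0 with hG0def
      -- the values of ht lie in the 1-dimensional kernel of gbar · ξ
      set ψ : W →ₗ[ℝ] ℝ := gbar.flip ξ with hψdef
      have hψ0 : ψ ≠ 0 := by
        intro hc
        exact hξ0 (hgnd ξ (fun η => by
          have := LinearMap.congr_fun hc η
          simpa [hψdef, hgsymm ξ η] using this))
      have hrange : Module.finrank ℝ (LinearMap.range ψ) = 1 := by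
        have hle : Module.finrank ℝ (LinearMap.range ψ) ≤ 1 := by
          simpa using Submodule.finrank_le (LinearMap.range ψ)
        have hpos : LinearMap.range ψ ≠ ⊥ := by
          simpa [LinearMap.range_eq_bot] using hψ0
        have hnt : Nontrivial (LinearMap.range ψ) := Submodule.nontrivial_iff_ne_bot.mpr hpos
        have := Module.finrank_pos_iff (R := ℝ) (M := LinearMap.range ψ) |>.mpr hnt
        omega
      have hker : Module.finrank ℝ (LinearMap.ker ψ) = 1 := by
        have := LinearMap.finrank_range_add_finrank_ker ψ
        rw [hW, hrange] at this; omega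
      have hmemker : ∀ X Y : V, ht X Y ∈ LinearMap.ker ψ := by
        intro X Y
        simp only [LinearMap.mem_ker, hψdef, LinearMap.flip_apply]
        exact key X Y
      have hspan : Submodule.span ℝ {G0} = LinearMap.ker ψ := by
        apply Submodule.eq_of_le_of_finrank_le
        · rw [Submodule.span_le, Set.singleton_subset_iff]
          exact hmemker X0 Y0
        · rw [hker, finrank_span_singleton hG0]
      have hmem : ∀ X Y : V, ht X Y ∈ Submodule.span ℝ {G0} := by
        intro X Y; rw [hspan]; exact hmemker X Y
      -- a functional f with f G0 = 1
      obtain ⟨f, hfG0⟩ : ∃ f : W →ₗ[ℝ] ℝ, f G0 = 1 := by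
        have b := Module.finBasis ℝ W
        have hrepr : b.repr G0 ≠ 0 := by simpa using hG0
        obtain ⟨i, hi⟩ : ∃ i, b.repr G0 i ≠ 0 := by
          by_contra hc; push_neg at hc
          exact hrepr (Finsupp.ext hc)
        exact ⟨(b.repr G0 i)⁻¹ • (b.coord i), by
          simp [Module.Basis.coord_apply, inv_mul_cancel₀ hi]⟩
      have hrep0 : ∀ X Y : V, ht X Y = f (ht X Y) • G0 := by
        intro X Y
        obtain ⟨c, hc⟩ := Submodule.mem_span_singleton.mp (hmem X Y)
        rw [← hc, map_smul, smul_eq_mul, hfG0, mul_one]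
      -- bilinearity and symmetry of (X, Y) ↦ f (ht X Y)
      have htadd1 : ∀ X X' Y : V, ht (X + X') Y = ht X Y + ht X' Y := by
        intro X X' Y; simp only [hht, map_add, LinearMap.add_apply, inner_add_left, add_smul]
        abel
      have htsmul1 : ∀ (c : ℝ) (X Y : V), ht (c • X) Y = c • ht X Y := by
        intro c X Y
        simp only [hht, map_smul, LinearMap.smul_apply, real_inner_smul_left, smul_sub, smul_smul]
      have htcomm : ∀ X Y : V, ht X Y = ht Y X := by
        intro X Y; simp only [hht, hsymm X Y, real_inner_comm X Y]
      have htadd2 : ∀ X Y Y' : V, ht X (Y + Y') = ht X Y + ht X Y' := by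
        intro X Y Y'; rw [htcomm, htadd1, htcomm Y X, htcomm Y' X]
      have htsmul2 : ∀ (c : ℝ) (X Y : V), ht X (c • Y) = c • ht X Y := by
        intro c X Y; rw [htcomm, htsmul1, htcomm Y X]
      let φ : V →ₗ[ℝ] V →ₗ[ℝ] ℝ := LinearMap.mk₂ ℝ (fun X Y => f (ht X Y))
        (by intro X X' Y; simp only [htadd1, map_add])
        (by intro c X Y; simp only [htsmul1, map_smul, smul_eq_mul])
        (by intro X Y Y'; simp only [htadd2, map_add])
        (by intro c X Y; simp only [htsmul2, map_smul, smul_eq_mul])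
      let B : V →ₗ[ℝ] V :=
        ((InnerProductSpace.toDual ℝ V).symm.toLinearEquiv.toLinearMap) ∘ₗ
          ((LinearMap.toContinuousLinearMap :
              (V →ₗ[ℝ] ℝ) ≃ₗ[ℝ] (V →L[ℝ] ℝ)).toLinearMap) ∘ₗ φ
      have hB : ∀ X Y : V, ⟪B X, Y⟫ = f (ht X Y) := by
        intro X Y
        simp only [B, LinearMap.coe_comp, Function.comp_apply, LinearEquiv.coe_coe,
          LinearIsometryEquiv.coe_toLinearEquiv]
        rw [InnerProductSpace.toDual_symm_apply]
        simp [φ]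
      have hBsa : ∀ X Y : V, ⟪B X, Y⟫ = ⟪X, B Y⟫ := by
        intro X Y
        rw [hB, real_inner_comm, hB, htcomm]
      have hBne : B ≠ 0 := by
        intro hc
        have := hB X0 Y0
        rw [hc, hfG0] at this
        simp at this
      -- trace of B ∘ B
      set b2 := stdOrthonormalBasis ℝ V with hb2
      have htrBB : LinearMap.trace ℝ V (B ∘ₗ B) = ∑ i, ⟪B (b2 i), B (b2 i)⟫ := by
        rw [LinearMap.trace_eq_matrix_trace ℝ b2.toBasis, Matrix.trace]
        congr 1
        funext i
        rw [Matrix.diag_apply, LinearMap.toMatrix_apply, b2.coe_toBasis_repr_apply,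
          b2.repr_apply_apply, OrthonormalBasis.coe_toBasis]
        simp only [LinearMap.comp_apply]
        rw [← hBsa]
      have htpos : 0 < LinearMap.trace ℝ V (B ∘ₗ B) := by
        rw [htrBB]
        have hnn : ∀ i ∈ Finset.univ, (0:ℝ) ≤ ⟪B (b2 i), B (b2 i)⟫ := fun i _ =>
          real_inner_self_nonneg
        rcases (Finset.sum_nonneg hnn).lt_or_eq with hlt | heq
        · exact hlt
        · exfalso
          have hz : ∀ i ∈ Finset.univ, ⟪B (b2 i), B (b2 i)⟫ = 0 :=
            (Finset.sum_eq_zero_iff_of_nonneg hnn).mp heq.symm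
          have hBz : ∀ i, B (b2 i) = 0 := fun i =>
            inner_self_eq_zero.mp (hz i (Finset.mem_univ i))
          apply hBne
          apply b2.toBasis.ext
          intro i
          simp [hBz i]
      set t := LinearMap.trace ℝ V (B ∘ₗ B) with htdef
      set s := Real.sqrt t with hsdef
      have hs0 : 0 < s := Real.sqrt_pos.mpr htpos
      have hss : s * s = t := Real.mul_self_sqrt htpos.le
      refine ⟨((n:ℝ) / s) • B, (s / (n:ℝ)) • G0, ?_, ?_, ?_⟩
      · intro X Y
        simp only [LinearMap.smul_apply, real_inner_smul_left, real_inner_smul_right]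
        rw [hBsa]
      · rw [LinearMap.smul_comp, LinearMap.comp_smul, smul_smul, map_smul, ← htdef]
        field_simp
        rw [smul_eq_mul, sq s, hss, div_mul_cancel₀ _ htpos.ne']
      · intro X Y
        rw [hrep0 X Y]
        simp only [LinearMap.smul_apply, real_inner_smul_left, hB, smul_smul]
        congr 1
        field_simp
  · rintro ⟨A0, G, hA0sa, htr, hrep⟩
    -- pick ξ ≠ 0 with gbar G ξ = 0
    obtain ⟨ξ, hξker, hξ0⟩ : ∃ ξ : W, gbar G ξ = 0 ∧ ξ ≠ 0 := by
      set ψ : W →ₗ[ℝ] ℝ := gbar G with hψdef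
      have hle : Module.finrank ℝ (LinearMap.range ψ) ≤ 1 := by
        simpa using Submodule.finrank_le (LinearMap.range ψ)
      have hker : 0 < Module.finrank ℝ (LinearMap.ker ψ) := by
        have := LinearMap.finrank_range_add_finrank_ker ψ
        rw [hW] at this; omega
      have hnt : Nontrivial (LinearMap.ker ψ) :=
        Module.finrank_pos_iff (R := ℝ) (M := LinearMap.ker ψ) |>.mp hker
      obtain ⟨⟨ξ, hξmem⟩, hξne⟩ := exists_ne (0 : LinearMap.ker ψ)
      refine ⟨ξ, hξmem, ?_⟩
      intro hc
      exact hξne (Subtype.ext hc)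
    refine ⟨ξ, hξ0, ?_⟩
    ext X
    have hz : ∀ Y : V, ⟪(At ξ) X, Y⟫ = 0 := by
      intro Y
      have h1 : gbar (ht X Y) ξ = 0 := by
        rw [hrep X Y, map_smul, LinearMap.smul_apply, hξker, smul_zero]
      rw [hht, map_sub, map_smul, LinearMap.sub_apply, LinearMap.smul_apply, ← hAh,
        hH ξ] at h1
      rw [hAt]
      simp only [LinearMap.sub_apply, LinearMap.smul_apply, LinearMap.id_apply,
        inner_sub_left, real_inner_smul_left]
      rw [sub_eq_zero] at h1 ⊢
      rw [h1]
      simp [mul_comm]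
    have := hz ((At ξ) X)
    simpa [inner_self_eq_zero] using this
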